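/- arXiv:2212.10519 — 7 statements merged into one kernel-verified Lean document; each statement's English description precedes it below -/
import Mathlib

section
/- Let N be a positive integer, let A be an invertible N×N complex matrix, let b, x ∈ ℂ^N with A x = b, and let x̂ ∈ ℂ^N satisfy (A + δA) x̂ = b for some N×N complex matrix δA. If there exists a real number α > 1 such that α · ‖A⁻¹‖₂ · ‖δA‖₂ ≤ 1, then the matrix A + δA is invertible, and (α/(α+1)) · ‖x‖₂ ≤ ‖x̂‖₂ ≤ (α/(α−1)) · ‖x‖₂. -/
set_option maxHeartbeats 1000000 in
/-- If `A x = b`, `(A + δA) x̂ = b`, and `α * ‖A⁻¹‖₂ * ‖δA‖₂ ≤ 1` for some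
`α > 1`, then `A + δA` is invertible and `(α/(α+1)) ‖x‖₂ ≤ ‖x̂‖₂ ≤ (α/(α−1)) ‖x‖₂`. -/
theorem stmt_0 (N : ℕ) (hN : 0 < N)
    (A δA : Matrix (Fin N) (Fin N) ℂ) (hA : IsUnit A)
    (b x xhat : EuclideanSpace ℂ (Fin N))
    (hx : A.mulVec x = b) (hxhat : (A + δA).mulVec xhat = b)
    (α : ℝ) (hα : 1 < α)
    (hbound : α * ‖Matrix.toEuclideanCLM (𝕜 := ℂ) A⁻¹‖ * ‖Matrix.toEuclideanCLM (𝕜 := ℂ) δA‖ ≤ 1) :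
    IsUnit (A + δA) ∧
      (α / (α + 1)) * ‖x‖ ≤ ‖xhat‖ ∧ ‖xhat‖ ≤ (α / (α - 1)) * ‖x‖ := by
  have hα0 : (0:ℝ) < α := lt_trans one_pos hα
  set fi := Matrix.toEuclideanCLM (𝕜 := ℂ) A⁻¹ with hfi
  set g := Matrix.toEuclideanCLM (𝕜 := ℂ) δA with hg
  set f := Matrix.toEuclideanCLM (𝕜 := ℂ) A with hf
  have hinvA : A⁻¹ * A = 1 := Matrix.nonsing_inv_mul A (Matrix.isUnit_iff_isUnit_det A |>.mp hA)
  have hAinv : A * A⁻¹ = 1 := Matrix.mul_nonsing_inv A (Matrix.isUnit_iff_isUnit_det A |>.mp hA)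
  have hfif : fi * f = 1 := by
    rw [hfi, hf, ← map_mul, hinvA, map_one]
  have hffi : f * fi = 1 := by
    rw [hfi, hf, ← map_mul, hAinv, map_one]
  -- norm bound
  have hns : ‖fi‖ * ‖g‖ ≤ 1 / α := by
    rw [le_div_iff₀ hα0]; linarith [hbound]
  have hfig : ‖fi * g‖ < 1 := by
    calc ‖fi * g‖ ≤ ‖fi‖ * ‖g‖ := norm_mul_le _ _
    _ ≤ 1 / α := hns
    _ < 1 := by rw [div_lt_one hα0]; exact hα
  -- invertibility
  have hunit1 : IsUnit (1 + fi * g) := by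
    have h := isUnit_one_sub_of_norm_lt_one (x := -(fi * g)) (by rwa [norm_neg])
    rwa [sub_neg_eq_add] at h
  have hfg : f + g = f * (1 + fi * g) := by
    rw [mul_add, mul_one, ← mul_assoc, hffi, one_mul]
  have hunitfg : IsUnit (f + g) := by
    rw [hfg]
    exact (hf ▸ hA.map (Matrix.toEuclideanCLM (𝕜 := ℂ))).mul hunit1
  have hunitAd : IsUnit (A + δA) := by
    have h2 : IsUnit (Matrix.toEuclideanCLM (𝕜 := ℂ) (A + δA)) := by
      rw [map_add]; exact hunitfg
    have := h2.map (Matrix.toEuclideanCLM (𝕜 := ℂ)).symm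
    simpa using this
  -- vector identity: xhat - x = - fi (g xhat)
  have happ : ∀ (M : Matrix (Fin N) (Fin N) ℂ) (v : EuclideanSpace ℂ (Fin N)),
      Matrix.toEuclideanCLM (𝕜 := ℂ) M v = (WithLp.equiv 2 _).symm (M.mulVec ((WithLp.equiv 2 _) v)) := by
    intro M v
    rfl
  have hkey : xhat - x = -(fi (g xhat)) := by
    have h1 : f xhat + g xhat = f x := by
      rw [hf, hg, happ, happ, happ]; simp only [WithLp.equiv_symm_apply, ← WithLp.toLp_add]
      congr 1
      show A.mulVec xhat + δA.mulVec xhat = A.mulVec x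
      rw [hx, ← hxhat, Matrix.add_mulVec]
    have h2 : fi (f xhat) + fi (g xhat) = fi (f x) := by
      rw [← map_add, h1]
    have h3 : ∀ v, fi (f v) = v := by
      intro v
      have := congrFun (congrArg DFunLike.coe hfif) v
      simpa using this
    rw [h3, h3] at h2
    rw [← h2]; abel
  have hd : ‖xhat - x‖ ≤ (1/α) * ‖xhat‖ := by
    rw [hkey, norm_neg]
    calc ‖fi (g xhat)‖ ≤ ‖fi‖ * ‖g xhat‖ := fi.le_opNorm _
      _ ≤ ‖fi‖ * (‖g‖ * ‖xhat‖) := by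
          have := g.le_opNorm xhat
          exact mul_le_mul_of_nonneg_left this (norm_nonneg fi)
      _ = (‖fi‖ * ‖g‖) * ‖xhat‖ := by ring
      _ ≤ (1/α) * ‖xhat‖ := mul_le_mul_of_nonneg_right hns (norm_nonneg xhat)
  have ht1 : ‖x‖ ≤ ‖xhat‖ + ‖xhat - x‖ := by
    have := norm_sub_le xhat (xhat - x)
    simpa using this
  have ht2 : ‖xhat‖ ≤ ‖x‖ + ‖xhat - x‖ := by
    have := norm_add_le x (xhat - x)
    simpa using this
  have hd' : α * ‖xhat - x‖ ≤ ‖xhat‖ := by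
    have h := mul_le_mul_of_nonneg_left hd hα0.le
    rwa [← mul_assoc, mul_one_div, div_self (ne_of_gt hα0), one_mul] at h
  refine ⟨hunitAd, ?_, ?_⟩
  · rw [div_mul_eq_mul_div, div_le_iff₀ (by linarith)]
    nlinarith [hd', mul_le_mul_of_nonneg_left ht1 hα0.le]
  · rw [div_mul_eq_mul_div, le_div_iff₀ (by linarith)]
    nlinarith [hd', mul_le_mul_of_nonneg_left ht2 hα0.le]
end

section
/- Let Γ ⊆ ℂ be a nonempty set, let F : ℂ → ℂ, let z₀, …, z_N ∈ Γ, and let Λ ≥ 0 be a constant such that for every complex polynomial Q of degree at most N, sup_{z∈Γ} |Q(z)| ≤ Λ · max_{0≤j≤N} |Q(z_j)| (the Lebesgue constant property for the nodes {z_j} on Γ). Let V be the (N+1)×(N+1) Vandermonde matrix with entries V_{jk} = z_j^k, let f = (F(z₀), …, F(z_N))ᵀ, and let a = (a₀, …, a_N)ᵀ solve V a = f, so that P_N(z) = Σ_{k=0}^N a_k z^k interpolates F at the nodes. Suppose â = (â₀, …, â_N)ᵀ satisfies (V + δV) â = f for some matrix δV with ‖δV‖₂ ≤ u·γ, where u,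 γ ≥ 0 are constants, and let P̂_N(z) = Σ_{k=0}^N â_k z^k. If sup_{z∈Γ} |F(z) − P_N(z)| ≤ ε for a constant ε ≥ 0, then for every z ∈ Γ, |F(z) − P̂_N(z)| ≤ ε + u·γ·Λ·‖â‖₂. -/
open Finset in
/-- If `P_N` interpolates `F` at nodes `z j ∈ Γ` with Lebesgue constant `Λ`,
`â` solves the perturbed Vandermonde system `(V + δV) â = f` with `‖δV‖₂ ≤ u γ`, and
`sup_Γ |F - P_N| ≤ ε`, then `|F(z) - P̂_N(z)| ≤ ε + u γ Λ ‖â‖₂` on `Γ`. -/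
theorem stmt_1 (N : ℕ) (Γ : Set ℂ) (hΓ : Γ.Nonempty) (F : ℂ → ℂ)
    (z : Fin (N + 1) → ℂ) (hz : ∀ j, z j ∈ Γ)
    (Λ : ℝ) (hΛ : 0 ≤ Λ)
    (hLeb : ∀ Q : Polynomial ℂ, Q.natDegree ≤ N → ∀ w ∈ Γ,
      ‖Q.eval w‖ ≤ Λ * (univ.sup' univ_nonempty fun j => ‖Q.eval (z j)‖))
    (V δV : Matrix (Fin (N + 1)) (Fin (N + 1)) ℂ)
    (hV : V = Matrix.of fun j k : Fin (N + 1) => z j ^ (k : ℕ))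
    (f a ahat : EuclideanSpace ℂ (Fin (N + 1)))
    (hf : ∀ j, f j = F (z j))
    (ha : V.mulVec a = f)
    (u γ : ℝ) (hu : 0 ≤ u) (hγ : 0 ≤ γ)
    (hahat : (V + δV).mulVec ahat = f)
    (hδV : ‖Matrix.toEuclideanCLM (𝕜 := ℂ) δV‖ ≤ u * γ)
    (ε : ℝ) (hε : 0 ≤ ε)
    (herr : ∀ w ∈ Γ, ‖F w - ∑ k, a k * w ^ (k : ℕ)‖ ≤ ε) :
    ∀ w ∈ Γ, ‖F w - ∑ k, ahat k * w ^ (k : ℕ)‖ ≤ ε + u * γ * Λ * ‖ahat‖ := by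
  intro w hw
  -- the difference polynomial
  set Q : Polynomial ℂ := ∑ k : Fin (N + 1), Polynomial.C (a k - ahat k) * Polynomial.X ^ (k : ℕ)
    with hQ
  have hQdeg : Q.natDegree ≤ N := by
    apply Polynomial.natDegree_sum_le_of_forall_le
    intro k _
    refine (Polynomial.natDegree_C_mul_le (a k - ahat k) (Polynomial.X ^ (k : ℕ))).trans ?_
    simpa using Nat.lt_succ_iff.mp k.isLt
  have hQeval : ∀ v : ℂ, Q.eval v = ∑ k, (a k - ahat k) * v ^ (k : ℕ) := by
    intro v; simp [hQ, Polynomial.eval_finset_sum]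
  -- value at nodes equals (δV * ahat) j
  have hnode : ∀ j, Q.eval (z j) = δV.mulVec ahat j := by
    intro j
    have h1 : V.mulVec a j = f j := congrFun ha j
    have h2 : V.mulVec ahat j + δV.mulVec ahat j = f j := by
      have := congrFun hahat j
      simpa [Matrix.add_mulVec] using this
    have : Q.eval (z j) = V.mulVec a j - V.mulVec ahat j := by
      simp only [hQeval, hV, Matrix.mulVec, dotProduct, Matrix.of_apply]
      rw [← Finset.sum_sub_distrib]
      exact Finset.sum_congr rfl fun k _ => by ring
    rw [this, h1, ← h2]; ring
  -- bound on node values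
  have hcoord : ∀ j, ‖δV.mulVec ahat j‖ ≤ u * γ * ‖ahat‖ := by
    intro j
    have happ : (Matrix.toEuclideanCLM (𝕜 := ℂ) δV) ahat = (WithLp.equiv 2 _).symm (δV.mulVec (WithLp.equiv 2 _ ahat)) := rfl
    have hb : ‖(Matrix.toEuclideanCLM (𝕜 := ℂ) δV) ahat‖ ≤ u * γ * ‖ahat‖ := by
      calc ‖(Matrix.toEuclideanCLM (𝕜 := ℂ) δV) ahat‖
          ≤ ‖Matrix.toEuclideanCLM (𝕜 := ℂ) δV‖ * ‖ahat‖ := ContinuousLinearMap.le_opNorm _ _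
        _ ≤ u * γ * ‖ahat‖ := by gcongr
    have hc : ‖δV.mulVec ahat j‖ ≤ ‖(Matrix.toEuclideanCLM (𝕜 := ℂ) δV) ahat‖ := by
      rw [happ, EuclideanSpace.norm_eq]
      have : ‖δV.mulVec ahat j‖ = Real.sqrt (‖δV.mulVec ahat j‖ ^ 2) := by
        rw [Real.sqrt_sq (norm_nonneg _)]
      rw [this]
      apply Real.sqrt_le_sqrt
      have := Finset.single_le_sum (f := fun i => ‖((WithLp.equiv 2 _).symm (δV.mulVec (WithLp.equiv 2 _ ahat)) : EuclideanSpace ℂ (Fin (N+1))) i‖ ^ 2)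
        (fun i _ => sq_nonneg _) (Finset.mem_univ j)
      simpa using this
    exact hc.trans hb
  have hsup : (univ.sup' univ_nonempty fun j => ‖Q.eval (z j)‖) ≤ u * γ * ‖ahat‖ := by
    apply Finset.sup'_le
    intro j _
    rw [hnode j]; exact hcoord j
  have hLb := hLeb Q hQdeg w hw
  have hQw : ‖Q.eval w‖ ≤ Λ * (u * γ * ‖ahat‖) := by
    refine hLb.trans ?_
    gcongr
  have key : F w - ∑ k, ahat k * w ^ (k : ℕ) =
      (F w - ∑ k, a k * w ^ (k : ℕ)) + Q.eval w := by
    rw [hQeval]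
    rw [show (∑ k, (a k - ahat k) * w ^ (k : ℕ)) = (∑ k, a k * w ^ (k : ℕ)) - ∑ k, ahat k * w ^ (k : ℕ) from by rw [← Finset.sum_sub_distrib]; exact Finset.sum_congr rfl fun k _ => by ring]
    ring
  calc ‖F w - ∑ k, ahat k * w ^ (k : ℕ)‖
      ≤ ‖F w - ∑ k, a k * w ^ (k : ℕ)‖ + ‖Q.eval w‖ := by
        rw [key]; exact norm_add_le _ _
    _ ≤ ε + u * γ * Λ * ‖ahat‖ := by
        have := herr w hw
        nlinarith [hQw]
end

section
/- Let Γ ⊆ ℂ be a nonempty set, let F : ℂ → ℂ, let z₀, …, z_N ∈ Γ be distinct, and let Λ ≥ 0 be a constant such that for every complex polynomial Q of degree at most N, sup_{z∈Γ} |Q(z)| ≤ Λ · max_{0≤j≤N} |Q(z_j)| (the Lebesgue constant property for the nodes {z_j} on Γ). Let V be the (N+1)×(N+1) Vandermonde matrix with entries V_{jk} = z_j^k, let f = (F(z₀), …, F(z_N))ᵀ, let a solve V a = f, and set P_N(z) = Σ_{k=0}^N a_k z^k. Suppose â satisfies (V + δV) â = f for some matrix δV with ‖δV‖₂ ≤ u·γ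 for constants u, γ > 0, and that ‖V⁻¹‖₂ ≤ 1/(2 u γ); set P̂_N(z) = Σ_{k=0}^N â_k z^k. If sup_{z∈Γ} |F(z) − P_N(z)| ≤ ε for a constant ε ≥ 0, then for every z ∈ Γ, |F(z) − P̂_N(z)| ≤ ε + 2·u·γ·Λ·‖a‖₂. -/
open Finset in
lemma euclidean_coord_le_norm {n : Type*} [Fintype n] (x : EuclideanSpace ℂ n) (j : n) :
    ‖x j‖ ≤ ‖x‖ := by
  rw [EuclideanSpace.norm_eq]
  have : ‖x j‖ = Real.sqrt (‖x j‖ ^ 2) := by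
    rw [Real.sqrt_sq (norm_nonneg _)]
  rw [this]
  apply Real.sqrt_le_sqrt
  exact Finset.single_le_sum (f := fun i => ‖x i‖ ^ 2)
    (fun i _ => sq_nonneg _) (Finset.mem_univ j)

open Finset in
/-- A priori bound for interpolation in the monomial basis: under the
Lebesgue-constant hypothesis, if `(V + δV) â = f` with `‖δV‖₂ ≤ u γ`,
`‖V⁻¹‖₂ ≤ 1/(2uγ)`, and `sup_Γ |F - P_N| ≤ ε`, then
`|F(z) - P̂_N(z)| ≤ ε + 2 u γ Λ ‖a‖₂` on `Γ`. -/
theorem stmt_3 (N : ℕ) (Γ : Set ℂ) (hΓ : Γ.Nonempty) (F : ℂ → ℂ)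
    (z : Fin (N + 1) → ℂ) (hz : ∀ j, z j ∈ Γ) (hzinj : Function.Injective z)
    (Λ : ℝ) (hΛ : 0 ≤ Λ)
    (hLeb : ∀ Q : Polynomial ℂ, Q.natDegree ≤ N → ∀ w ∈ Γ,
      ‖Q.eval w‖ ≤ Λ * (univ.sup' univ_nonempty fun j => ‖Q.eval (z j)‖))
    (V δV : Matrix (Fin (N + 1)) (Fin (N + 1)) ℂ)
    (hV : V = Matrix.of fun j k : Fin (N + 1) => z j ^ (k : ℕ))
    (f a ahat : EuclideanSpace ℂ (Fin (N + 1)))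
    (hf : ∀ j, f j = F (z j))
    (ha : V.mulVec a = f)
    (u γ : ℝ) (hu : 0 < u) (hγ : 0 < γ)
    (hahat : (V + δV).mulVec ahat = f)
    (hδV : ‖Matrix.toEuclideanCLM (𝕜 := ℂ) δV‖ ≤ u * γ)
    (hVinv : ‖Matrix.toEuclideanCLM (𝕜 := ℂ) V⁻¹‖ ≤ 1 / (2 * u * γ))
    (ε : ℝ) (hε : 0 ≤ ε)
    (herr : ∀ w ∈ Γ, ‖F w - ∑ k, a k * w ^ (k : ℕ)‖ ≤ ε) :
    ∀ w ∈ Γ, ‖F w - ∑ k, ahat k * w ^ (k : ℕ)‖ ≤ ε + 2 * u * γ * Λ * ‖a‖ := by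
  intro w hw
  have huγ : 0 < u * γ := mul_pos hu hγ
  -- V is invertible
  have hdet : IsUnit V.det := by
    rw [hV]
    exact isUnit_iff_ne_zero.mpr
      ((Matrix.det_vandermonde_ne_zero_iff (v := z)).mpr hzinj)
  -- key relation : V (a - ahat) = δV ahat
  have hrel : V.mulVec ((a : Fin (N+1) → ℂ) - ahat) = δV.mulVec ahat := by
    have h1 : V.mulVec ahat + δV.mulVec ahat = V.mulVec a := by
      rw [← Matrix.add_mulVec, hahat, ha]
    rw [Matrix.mulVec_sub]
    rw [← h1]
    ring_nf
  set S := Matrix.toEuclideanCLM (𝕜 := ℂ) δV with hSdef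
  set T := Matrix.toEuclideanCLM (𝕜 := ℂ) V⁻¹ with hTdef
  -- coordinates of S ahat
  have hScoord : ∀ x : EuclideanSpace ℂ (Fin (N+1)),
      (S x : Fin (N+1) → ℂ) = δV.mulVec x := by
    intro x
    exact Matrix.ofLp_toEuclideanCLM δV x
  have hTcoord : ∀ x : EuclideanSpace ℂ (Fin (N+1)),
      (T x : Fin (N+1) → ℂ) = (V⁻¹).mulVec x := by
    intro x
    exact Matrix.ofLp_toEuclideanCLM V⁻¹ x
  -- a - ahat = T (S ahat)
  have key : a - ahat = T (S ahat) := by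
    have : ((a - ahat : EuclideanSpace ℂ (Fin (N+1))) : Fin (N+1) → ℂ)
        = ((T (S ahat) : EuclideanSpace ℂ (Fin (N+1))) : Fin (N+1) → ℂ) := by
      rw [hTcoord, hScoord, ← hrel, Matrix.mulVec_mulVec, Matrix.nonsing_inv_mul V hdet,
        Matrix.one_mulVec, WithLp.ofLp_sub]
    exact WithLp.ofLp_injective 2 this
  -- norm bound : ‖a - ahat‖ ≤ ‖ahat‖/2
  have hd : ‖a - ahat‖ ≤ ‖ahat‖ / 2 := by
    rw [key]
    calc ‖T (S ahat)‖ ≤ ‖T‖ * ‖S ahat‖ := T.le_opNorm _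
      _ ≤ (1 / (2 * u * γ)) * (‖S‖ * ‖ahat‖) := by
          apply mul_le_mul hVinv (S.le_opNorm _) (norm_nonneg _)
          positivity
      _ ≤ (1 / (2 * u * γ)) * ((u * γ) * ‖ahat‖) := by
          apply mul_le_mul_of_nonneg_left
            (mul_le_mul_of_nonneg_right hδV (norm_nonneg _))
          positivity
      _ = ‖ahat‖ / 2 := by field_simp
  have hahat_norm : ‖ahat‖ ≤ 2 * ‖a‖ := by
    have h1 : ‖ahat‖ ≤ ‖a‖ + ‖a - ahat‖ := by
      have h2 := norm_sub_le a (a - ahat)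
      rw [sub_sub_cancel] at h2
      exact h2
    linarith
  -- bound on ‖S ahat‖
  have hSa : ‖S ahat‖ ≤ 2 * u * γ * ‖a‖ := by
    calc ‖S ahat‖ ≤ ‖S‖ * ‖ahat‖ := S.le_opNorm _
      _ ≤ (u * γ) * (2 * ‖a‖) := by
          apply mul_le_mul hδV hahat_norm (norm_nonneg _) (le_of_lt huγ)
      _ = 2 * u * γ * ‖a‖ := by ring
  -- the difference polynomial
  set Q : Polynomial ℂ :=
    ∑ k : Fin (N+1), Polynomial.C (a k - ahat k) * Polynomial.X ^ (k : ℕ) with hQdef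
  have hQdeg : Q.natDegree ≤ N := by
    apply Polynomial.natDegree_sum_le_of_forall_le
    intro k _
    calc (Polynomial.C (a k - ahat k) * Polynomial.X ^ (k : ℕ)).natDegree
        ≤ (Polynomial.X ^ (k : ℕ) : Polynomial ℂ).natDegree :=
          Polynomial.natDegree_C_mul_le _ _
      _ ≤ N := by rw [Polynomial.natDegree_X_pow]; omega
  have hQeval : ∀ v : ℂ, Q.eval v = ∑ k, (a k - ahat k) * v ^ (k : ℕ) := by
    intro v
    simp [hQdef, Polynomial.eval_finset_sum]
  -- evaluate Q at nodes
  have hQnode : ∀ j, Q.eval (z j) = (δV.mulVec ahat) j := by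
    intro j
    rw [hQeval, ← hrel]
    simp [Matrix.mulVec, dotProduct, hV, mul_comm]
  have hsup : (univ.sup' univ_nonempty fun j => ‖Q.eval (z j)‖)
      ≤ 2 * u * γ * ‖a‖ := by
    apply Finset.sup'_le
    intro j _
    rw [hQnode j]
    calc ‖(δV.mulVec ahat) j‖ = ‖(S ahat) j‖ := by
          rw [hScoord]
      _ ≤ ‖S ahat‖ := euclidean_coord_le_norm _ j
      _ ≤ 2 * u * γ * ‖a‖ := hSa
  have hQw : ‖Q.eval w‖ ≤ Λ * (2 * u * γ * ‖a‖) := by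
    calc ‖Q.eval w‖
        ≤ Λ * (univ.sup' univ_nonempty fun j => ‖Q.eval (z j)‖) :=
          hLeb Q hQdeg w hw
      _ ≤ Λ * (2 * u * γ * ‖a‖) := mul_le_mul_of_nonneg_left hsup hΛ
  -- conclude
  have hsplit : F w - ∑ k, ahat k * w ^ (k : ℕ)
      = (F w - ∑ k, a k * w ^ (k : ℕ)) + Q.eval w := by
    have h3 : ∑ k, (a k - ahat k) * w ^ (k : ℕ)
        = (∑ k, a k * w ^ (k : ℕ)) - ∑ k, ahat k * w ^ (k : ℕ) := by
      rw [← Finset.sum_sub_distrib]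
      exact Finset.sum_congr rfl fun k _ => by ring
    rw [hQeval, h3]
    ring
  rw [hsplit]
  calc ‖(F w - ∑ k, a k * w ^ (k : ℕ)) + Q.eval w‖
      ≤ ‖F w - ∑ k, a k * w ^ (k : ℕ)‖ + ‖Q.eval w‖ :=
        norm_add_le _ _
    _ ≤ ε + Λ * (2 * u * γ * ‖a‖) := add_le_add (herr w hw) hQw
    _ = ε + 2 * u * γ * Λ * ‖a‖ := by ring
end

section
/- Let P_N(z) = Σ_{k=0}^N a_k z^k be a complex polynomial of degree at most N. Then the Euclidean norm of its coefficient vector satisfies ‖a‖₂ ≤ (1 + √2)^N · sup_{x ∈ [−1,1]} |P_N(x)|, where the supremum is over the real interval [−1,1]. -/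
open Complex Finset
open scoped Real

namespace Stmt6

noncomputable def P {N : ℕ} (a : Fin (N+1) → ℂ) (z : ℂ) : ℂ := ∑ k, a k * z ^ (k:ℕ)

noncomputable def Q {N : ℕ} (a : Fin (N+1) → ℂ) (w : ℂ) : ℂ :=
  ∑ k, a k * ((w^2+1)/2) ^ (k:ℕ) * w ^ (N - (k:ℕ))

lemma Q_eq {N : ℕ} (a : Fin (N+1) → ℂ) {v : ℂ} (hv : v ≠ 0) :
    Q a v = v ^ N * P a ((v + v⁻¹)/2) := by
  unfold Q P
  rw [Finset.mul_sum]
  refine Finset.sum_congr rfl fun k _ => ?_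
  have hk : (k:ℕ) ≤ N := Nat.lt_succ_iff.mp k.isLt
  have h1 : ((v^2+1)/2) = v * ((v + v⁻¹)/2) := by field_simp
  rw [h1, mul_pow]
  have h2 : v ^ (k:ℕ) * v ^ (N - (k:ℕ)) = v ^ N := by
    rw [← pow_add, Nat.add_sub_cancel' hk]
  calc a k * (v ^ (k:ℕ) * ((v + v⁻¹)/2) ^ (k:ℕ)) * v ^ (N - (k:ℕ))
      = (v ^ (k:ℕ) * v ^ (N - (k:ℕ))) * (a k * ((v + v⁻¹)/2) ^ (k:ℕ)) := by ring
    _ = v ^ N * (a k * ((v + v⁻¹)/2) ^ (k:ℕ)) := by rw [h2]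

lemma Q_diff {N : ℕ} (a : Fin (N+1) → ℂ) : Differentiable ℂ (Q a) := by
  unfold Q
  apply Differentiable.fun_sum
  intro k _
  fun_prop

lemma Q_bound {N : ℕ} (a : Fin (N+1) → ℂ) {M : ℝ}
    (hM : ∀ x ∈ Set.Icc (-1:ℝ) 1, ‖P a x‖ ≤ M) :
    ∀ v : ℂ, ‖v‖ ≤ 1 → ‖Q a v‖ ≤ M := by
  intro v hv
  have hcl : v ∈ closure (Metric.ball (0:ℂ) 1) := by
    rw [closure_ball (0:ℂ) one_ne_zero]
    simpa using hv
  refine Complex.norm_le_of_forall_mem_frontier_norm_le Metric.isBounded_ball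
    (Q_diff a).diffContOnCl ?_ hcl
  intro z hz
  rw [frontier_ball (0:ℂ) one_ne_zero] at hz
  have hz1 : ‖z‖ = 1 := by simpa using hz
  have hz0 : z ≠ 0 := by intro h; rw [h] at hz1; simp at hz1
  rw [Q_eq a hz0, Complex.inv_eq_conj hz1]
  rw [Complex.add_conj]
  have h2 : ((2 * z.re : ℝ) : ℂ) / 2 = ((z.re : ℝ) : ℂ) := by push_cast; ring
  rw [h2]
  have hre : z.re ∈ Set.Icc (-1:ℝ) 1 := by
    have habs : |z.re| ≤ 1 := by
      rw [← hz1]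
      exact Complex.abs_re_le_norm z
    exact abs_le.mp habs
  rw [norm_mul, norm_pow, hz1, one_pow, one_mul]
  exact hM z.re hre

/-- existence of the Joukowski preimage -/
lemma exists_v {z : ℂ} (hz : ‖z‖ = 1) :
    ∃ v : ℂ, v ≠ 0 ∧ ‖v‖ ≤ 1 ∧ ‖v⁻¹‖ ≤ 1 + Real.sqrt 2 ∧ v + v⁻¹ = 2*z := by
  obtain ⟨s, hs⟩ := IsAlgClosed.exists_pow_nat_eq (z^2 - 1) (n := 2) (by norm_num)
  have hmul : (z + s) * (z - s) = 1 := by linear_combination -hs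
  have hsn : ‖s‖ ≤ Real.sqrt 2 := by
    have h1 : ‖s‖^2 = ‖z^2 - 1‖ := by rw [← hs, norm_pow]
    have h2 : ‖z^2 - 1‖ ≤ 2 := by
      calc ‖z^2 - 1‖ ≤ ‖z^2‖ + ‖(1:ℂ)‖ := norm_sub_le _ _
        _ = 2 := by rw [norm_pow, hz]; norm_num
    have h3 : Real.sqrt 2 ^ 2 = 2 := Real.sq_sqrt (by norm_num)
    nlinarith [norm_nonneg s, Real.sqrt_nonneg 2]
  have hb : ∀ t : ℂ, t = s ∨ t = -s → ‖z + t‖ ≤ 1 + Real.sqrt 2 := by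
    intro t ht
    have : ‖t‖ = ‖s‖ := by rcases ht with h | h <;> simp [h]
    calc ‖z + t‖ ≤ ‖z‖ + ‖t‖ := norm_add_le _ _
      _ ≤ 1 + Real.sqrt 2 := by rw [hz, this]; linarith
  by_cases hc : ‖z + s‖ ≤ 1
  · refine ⟨z + s, ?_, hc, ?_, ?_⟩
    · intro h; rw [h] at hmul; simp at hmul
    · have hinv : (z + s)⁻¹ = z - s := inv_eq_of_mul_eq_one_right hmul
      rw [hinv]
      have : z - s = z + (-s) := by ring
      rw [this]; exact hb (-s) (Or.inr rfl)
    · have hinv : (z + s)⁻¹ = z - s := inv_eq_of_mul_eq_one_right hmul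
      rw [hinv]; ring
  · push_neg at hc
    have hzs0 : z + s ≠ 0 := by intro h; rw [h] at hmul; simp at hmul
    have hinv : (z - s)⁻¹ = z + s := inv_eq_of_mul_eq_one_right (by linear_combination -hs)
    have hzms : ‖z - s‖ ≤ 1 := by
      have h1 : ‖z + s‖ * ‖z - s‖ = 1 := by rw [← norm_mul, hmul, norm_one]
      nlinarith [norm_nonneg (z - s)]
    refine ⟨z - s, ?_, hzms, ?_, ?_⟩
    · intro h; rw [h] at hmul; simp at hmul
    · rw [hinv]; exact hb s (Or.inl rfl)
    · rw [hinv]; ring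

lemma circle_bound {N : ℕ} (a : Fin (N+1) → ℂ) {M : ℝ} (hM0 : 0 ≤ M)
    (hM : ∀ x ∈ Set.Icc (-1:ℝ) 1, ‖P a x‖ ≤ M) :
    ∀ z : ℂ, ‖z‖ = 1 → ‖P a z‖ ≤ (1 + Real.sqrt 2) ^ N * M := by
  intro z hz
  obtain ⟨v, hv0, hv1, hvi, hvz⟩ := exists_v hz
  have hQ : Q a v = v ^ N * P a z := by
    rw [Q_eq a hv0, hvz]
    congr 1
    field_simp
  have h1 : ‖v‖ ^ N * ‖P a z‖ ≤ M := by
    rw [← norm_pow, ← norm_mul, ← hQ]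
    exact Q_bound a hM v hv1
  have h2 : ‖v‖ * ‖v⁻¹‖ = 1 := by
    rw [norm_inv, mul_inv_cancel₀ (norm_ne_zero_iff.mpr hv0)]
  calc ‖P a z‖ = (‖v‖ * ‖v⁻¹‖) ^ N * ‖P a z‖ := by rw [h2]; ring
    _ = ‖v⁻¹‖ ^ N * (‖v‖ ^ N * ‖P a z‖) := by rw [mul_pow]; ring
    _ ≤ ‖v⁻¹‖ ^ N * M := by
        apply mul_le_mul_of_nonneg_left h1 (by positivity)
    _ ≤ (1 + Real.sqrt 2) ^ N * M := by
        apply mul_le_mul_of_nonneg_right _ hM0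
        exact pow_le_pow_left₀ (norm_nonneg _) hvi N

lemma integral_exp_int (m : ℤ) :
    (∫ x in (0:ℝ)..(2*π), Complex.exp (m * x * Complex.I)) =
      if m = 0 then (2*π : ℝ) else 0 := by
  by_cases hm : m = 0
  · simp [hm]
  · rw [if_neg hm]
    have hc : (m : ℂ) * Complex.I ≠ 0 := by
      simp [Complex.I_ne_zero, hm]
    have : ∀ x : ℝ, (m : ℂ) * x * Complex.I = ((m : ℂ) * Complex.I) * x := by
      intro x; ring
    simp_rw [this]
    rw [integral_exp_mul_complex hc]
    have h1 : (m : ℂ) * Complex.I * ((2*π : ℝ) : ℂ) = (m : ℂ) * (2 * (π:ℂ) * Complex.I) := by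
      push_cast; ring
    rw [h1, Complex.exp_int_mul_two_pi_mul_I]
    simp

lemma parseval {N : ℕ} (a : Fin (N+1) → ℂ) {C : ℝ} (hC0 : 0 ≤ C)
    (hC : ∀ z : ℂ, ‖z‖ = 1 → ‖P a z‖ ≤ C) :
    Real.sqrt (∑ k, ‖a k‖ ^ 2) ≤ C := by
  set g : ℝ → ℂ := fun x => P a (Complex.exp (x * Complex.I)) with hg
  have hgc : Continuous g := by
    unfold g; unfold P
    fun_prop
  -- pointwise expansion
  have key : ∀ x : ℝ, g x * (starRingEnd ℂ) (g x) =
      ∑ j : Fin (N+1), ∑ k : Fin (N+1), a j * (starRingEnd ℂ) (a k) *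
        Complex.exp (((((j:ℕ):ℤ) - ((k:ℕ):ℤ) : ℤ) : ℂ) * x * Complex.I) := by
    intro x
    unfold g; unfold P
    rw [map_sum, Finset.sum_mul_sum]
    refine Finset.sum_congr rfl fun j _ => Finset.sum_congr rfl fun k _ => ?_
    rw [map_mul, map_pow, ← Complex.exp_conj]
    have hcc : (starRingEnd ℂ) ((x:ℂ) * Complex.I) = -((x:ℂ) * Complex.I) := by
      simp [Complex.conj_ofReal]
    rw [hcc, ← Complex.exp_nat_mul, ← Complex.exp_nat_mul]
    rw [mul_mul_mul_comm, ← Complex.exp_add]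
    congr 1
    push_cast
    ring
  -- integral computation
  have hint : (∫ x in (0:ℝ)..(2*π), g x * (starRingEnd ℂ) (g x)) =
      (2*π : ℝ) * ∑ k : Fin (N+1), (Complex.normSq (a k) : ℂ) := by
    simp_rw [key]
    rw [intervalIntegral.integral_finset_sum]
    · have : ∀ j : Fin (N+1), (∫ x in (0:ℝ)..(2*π), ∑ k : Fin (N+1),
          a j * (starRingEnd ℂ) (a k) * Complex.exp (((((j:ℕ):ℤ) - ((k:ℕ):ℤ) : ℤ) : ℂ) * x * Complex.I))
          = (2*π:ℝ) * (Complex.normSq (a j) : ℂ) := by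
        intro j
        rw [intervalIntegral.integral_finset_sum]
        · have h2 : ∀ k : Fin (N+1), (∫ x in (0:ℝ)..(2*π),
              a j * (starRingEnd ℂ) (a k) * Complex.exp (((((j:ℕ):ℤ) - ((k:ℕ):ℤ) : ℤ) : ℂ) * x * Complex.I))
              = a j * (starRingEnd ℂ) (a k) * (if j = k then ((2*π:ℝ):ℂ) else 0) := by
            intro k
            rw [intervalIntegral.integral_const_mul, integral_exp_int]
            congr 1
            have : ((j:ℕ):ℤ) - ((k:ℕ):ℤ) = 0 ↔ j = k := by
              rw [sub_eq_zero]
              constructor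
              · intro h; exact Fin.ext (by exact_mod_cast h)
              · intro h; rw [h]
            simp only [this]
            split <;> simp
          simp_rw [h2]
          simp only [mul_ite, mul_zero]
          rw [Finset.sum_ite_eq]
          simp only [Finset.mem_univ, if_true]
          rw [Complex.mul_conj]
          ring
        · intro k _
          apply Continuous.intervalIntegrable
          fun_prop
      simp_rw [this]
      rw [← Finset.mul_sum]
    · intro j _
      apply Continuous.intervalIntegrable
      apply continuous_finset_sum
      intro k _
      fun_prop
  -- rewrite as real integral
  have hre : (∫ x in (0:ℝ)..(2*π), g x * (starRingEnd ℂ) (g x)) =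
      ((∫ x in (0:ℝ)..(2*π), Complex.normSq (g x) : ℝ) : ℂ) := by
    rw [← intervalIntegral.integral_ofReal]
    apply intervalIntegral.integral_congr
    intro x _
    exact Complex.mul_conj (g x)
  have heq : (∫ x in (0:ℝ)..(2*π), Complex.normSq (g x)) =
      2*π * ∑ k : Fin (N+1), Complex.normSq (a k) := by
    have := hint
    rw [hre] at this
    have h3 : ((2*π:ℝ) : ℂ) * ∑ k : Fin (N+1), (Complex.normSq (a k) : ℂ)
        = (((2*π) * ∑ k : Fin (N+1), Complex.normSq (a k) : ℝ) : ℂ) := by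
      push_cast
      ring
    rw [h3] at this
    exact_mod_cast this
  -- the bound
  have hbound : (∫ x in (0:ℝ)..(2*π), Complex.normSq (g x)) ≤ 2*π * C^2 := by
    have h1 : (∫ x in (0:ℝ)..(2*π), (C^2 : ℝ)) = 2*π * C^2 := by
      simp [mul_comm]
    rw [← h1]
    apply intervalIntegral.integral_mono_on (by positivity)
    · exact (Complex.continuous_normSq.comp hgc).intervalIntegrable _ _
    · exact continuous_const.intervalIntegrable _ _
    · intro x _
      have h2 : ‖g x‖ ≤ C := by
        apply hC
        rw [Complex.norm_exp_ofReal_mul_I]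
      calc Complex.normSq (g x) = ‖g x‖^2 := by
            rw [Complex.sq_norm]
        _ ≤ C^2 := by nlinarith [norm_nonneg (g x)]
  have hsum : (∑ k : Fin (N+1), ‖a k‖ ^ 2) ≤ C^2 := by
    have h4 : ∀ k : Fin (N+1), ‖a k‖^2 = Complex.normSq (a k) := by
      intro k; rw [Complex.sq_norm]
    simp_rw [h4]
    have hπ : (0:ℝ) < 2*π := by positivity
    rw [heq] at hbound
    nlinarith
  calc Real.sqrt (∑ k, ‖a k‖ ^ 2) ≤ Real.sqrt (C^2) := Real.sqrt_le_sqrt hsum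
    _ = C := Real.sqrt_sq hC0

end Stmt6

/-- The Euclidean norm of the coefficient vector of a polynomial of degree at
most `N` is at most `(1 + √2)^N` times its sup norm on the interval `[-1, 1]`. -/
theorem stmt_6 (N : ℕ) (a : EuclideanSpace ℂ (Fin (N + 1))) :
    ‖a‖ ≤ (1 + Real.sqrt 2) ^ N *
      sSup ((fun x : ℝ => ‖∑ k, a k * (x : ℂ) ^ (k : ℕ)‖) '' Set.Icc (-1) 1) := by
  set M := sSup ((fun x : ℝ => ‖∑ k, a k * (x : ℂ) ^ (k : ℕ)‖) '' Set.Icc (-1) 1)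
    with hM
  have hcont : Continuous (fun x : ℝ => ‖∑ k, a k * (x : ℂ) ^ (k : ℕ)‖) := by
    apply continuous_norm.comp
    fun_prop
  have hbdd : BddAbove ((fun x : ℝ => ‖∑ k, a k * (x : ℂ) ^ (k : ℕ)‖) ''
      Set.Icc (-1) 1) := (isCompact_Icc.image hcont).bddAbove
  have hle : ∀ x ∈ Set.Icc (-1:ℝ) 1, ‖Stmt6.P (fun k => a k) x‖ ≤ M := by
    intro x hx
    exact le_csSup hbdd ⟨x, hx, rfl⟩
  have hM0 : 0 ≤ M := by
    have := hle 0 (by norm_num)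
    exact le_trans (norm_nonneg _) this
  have hC : ∀ z : ℂ, ‖z‖ = 1 → ‖Stmt6.P (fun k => a k) z‖ ≤ (1 + Real.sqrt 2) ^ N * M :=
    Stmt6.circle_bound (fun k => a k) hM0 hle
  have hC0 : (0:ℝ) ≤ (1 + Real.sqrt 2) ^ N * M := by
    apply mul_nonneg _ hM0
    positivity
  rw [EuclideanSpace.norm_eq]
  exact Stmt6.parseval (fun k => a k) hC0 hC
end

section
/- Let P be a complex polynomial of degree at most N, and let ρ ≥ 1 be a real number. Then for every w ∈ ℂ with 1 ≤ |w| ≤ ρ, |P((w + w⁻¹)/2)| ≤ ρ^N · sup_{x ∈ [−1,1]} |P(x)|. -/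
open Polynomial Complex

/-- Bernstein's inequality: a polynomial of degree at most `N` grows at most
like `ρ^N` times its sup norm on `[-1,1]` on the closed Bernstein-ellipse region `E_ρ`
(the image of `{1 ≤ |w| ≤ ρ}` under the Joukowski map). -/
theorem stmt_7 (N : ℕ) (P : Polynomial ℂ) (hP : P.natDegree ≤ N) (ρ : ℝ) (hρ : 1 ≤ ρ)
    (w : ℂ) (h1 : 1 ≤ ‖w‖) (h2 : ‖w‖ ≤ ρ) :
    ‖P.eval ((w + w⁻¹) / 2)‖ ≤
      ρ ^ N * sSup ((fun x : ℝ => ‖P.eval (x : ℂ)‖) '' Set.Icc (-1) 1) := by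
  set M := sSup ((fun x : ℝ => ‖P.eval (x : ℂ)‖) '' Set.Icc (-1) 1) with hM
  have hcont : Continuous fun x : ℝ => ‖P.eval (x : ℂ)‖ := by
    exact continuous_norm.comp (P.continuous_aeval.comp Complex.continuous_ofReal)
  have hbdd : BddAbove ((fun x : ℝ => ‖P.eval (x : ℂ)‖) '' Set.Icc (-1) 1) :=
    (isCompact_Icc.image hcont).bddAbove
  have hle : ∀ x : ℝ, x ∈ Set.Icc (-1 : ℝ) 1 → ‖P.eval (x : ℂ)‖ ≤ M :=
    fun x hx => le_csSup hbdd ⟨x, hx, rfl⟩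
  have hM0 : 0 ≤ M := le_trans (norm_nonneg _) (hle 0 (by norm_num))
  -- the polynomial Q with Q(u) = u^N * P((u+u⁻¹)/2) for u ≠ 0
  set Q : Polynomial ℂ := ∑ k ∈ Finset.range (N + 1),
      Polynomial.C (P.coeff k / 2 ^ k) * (Polynomial.X ^ 2 + 1) ^ k * Polynomial.X ^ (N - k) with hQ
  have hQeval : ∀ u : ℂ, u ≠ 0 → Q.eval u = u ^ N * P.eval ((u + u⁻¹) / 2) := by
    intro u hu
    rw [hQ, Polynomial.eval_finset_sum,
      Polynomial.eval_eq_sum_range' (Nat.lt_succ_of_le hP), Finset.mul_sum]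
    refine Finset.sum_congr rfl fun k hk => ?_
    have hk' : k ≤ N := Nat.lt_succ_iff.mp (Finset.mem_range.mp hk)
    simp only [Polynomial.eval_mul, Polynomial.eval_C, Polynomial.eval_pow,
      Polynomial.eval_add, Polynomial.eval_X, Polynomial.eval_one]
    rw [show N = (N - k) + k from (Nat.sub_add_cancel hk').symm, pow_add]
    have e' : u ^ 2 + 1 = 2 * ((u + u⁻¹) / 2) * u := by
      linear_combination (-1 : ℂ) * mul_inv_cancel₀ hu
    rw [Nat.add_sub_cancel, e', mul_pow, mul_pow, div_mul_eq_mul_div, mul_comm (P.coeff k),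
      mul_assoc, mul_assoc, mul_div_cancel_left₀ _ (pow_ne_zero k (two_ne_zero' ℂ))]
    ring
  have hsph : ∀ u : ℂ, u ∈ frontier (Metric.ball (0 : ℂ) 1) → ‖Q.eval u‖ ≤ M := by
    intro u hu
    rw [frontier_ball (0 : ℂ) one_ne_zero, mem_sphere_zero_iff_norm] at hu
    have hu0 : u ≠ 0 := by intro h; simp [h] at hu
    have huinv : u⁻¹ = (starRingEnd ℂ) u := by
      rw [Complex.inv_def, Complex.normSq_eq_norm_sq]
      simp [hu]
    have hre : (u + u⁻¹) / 2 = ((u.re : ℝ) : ℂ) := by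
      rw [huinv, Complex.add_conj]; push_cast; ring
    rw [hQeval u hu0, norm_mul, norm_pow, hu, one_pow, one_mul, hre]
    refine hle u.re ?_
    have := Complex.abs_re_le_norm u
    rw [hu] at this
    constructor <;> [linarith [abs_le.mp this]; linarith [(abs_le.mp this).2]]
  have hball : ∀ u : ℂ, ‖u‖ ≤ 1 → ‖Q.eval u‖ ≤ M := by
    intro u hu
    refine Complex.norm_le_of_forall_mem_frontier_norm_le Metric.isBounded_ball
      (Q.differentiable.diffContOnCl) hsph ?_
    rw [closure_ball (0 : ℂ) one_ne_zero, Metric.mem_closedBall]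
    simpa [Complex.dist_eq] using hu
  -- apply at u = w⁻¹
  have hw0 : w ≠ 0 := by
    intro h; rw [h] at h1; simp at h1; linarith
  have huabs : ‖w⁻¹‖ ≤ 1 := by
    rw [norm_inv]; exact inv_le_one_of_one_le₀ h1
  have hkey := hball w⁻¹ huabs
  rw [hQeval w⁻¹ (inv_ne_zero hw0)] at hkey
  rw [inv_inv] at hkey
  have : (w⁻¹ + w) / 2 = (w + w⁻¹) / 2 := by ring
  rw [this, norm_mul, norm_pow, norm_inv] at hkey
  have hwpos : (0 : ℝ) < ‖w‖ := lt_of_lt_of_le one_pos h1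
  have h3 : ‖P.eval ((w + w⁻¹) / 2)‖ ≤ ‖w‖ ^ N * M := by
    have := mul_le_mul_of_nonneg_left hkey (le_of_lt (pow_pos hwpos N))
    rwa [← mul_assoc, ← mul_pow, mul_inv_cancel₀ (ne_of_gt hwpos),
      one_pow, one_mul] at this
  calc ‖P.eval ((w + w⁻¹) / 2)‖ ≤ ‖w‖ ^ N * M := h3
    _ ≤ ρ ^ N * M := by
        exact mul_le_mul_of_nonneg_right (pow_le_pow_left₀ (norm_nonneg w) h2 N) hM0
end

section
/- Let Γ ⊆ ℂ be a nonempty set, let F : ℂ → ℂ, and let N be a positive integer. Let ρ > 1, ρ_* > 1, C ≥ 0 and Λ ≥ 0 be constants, and let z₀, …, z_N ∈ Γ be distinct points such that: (i) for every n ≤ N and every complex polynomial Q(z) = Σ_{k=0}^n b_k z^k of degree at most n, (Σ_{k=0}^n |b_k|²)^{1/2} ≤ ρ_*^n · sup_{z∈Γ} |Q(z)|; (ii) there exist polynomials Q₀, Q₁, …, Q_N with deg Q_n ≤ n and sup_{z∈Γ} |F(z) − Q_n(z)| ≤ C·ρ^{−n} for all 0 ≤ n ≤ N; (iii) for every complex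 polynomial Q of degree at most N, sup_{z∈Γ} |Q(z)| ≤ Λ · max_{0≤j≤N} |Q(z_j)|. Let P_N(z) = Σ_{k=0}^N a_k z^k be the degree-N interpolating polynomial of F at z₀, …, z_N. Then ‖a‖₂ ≤ sup_{z∈Γ} |F(z)| + C·( Λ·(ρ_*/ρ)^N + 2·ρ_*·Σ_{j=0}^{N−1} (ρ_*/ρ)^j + 1 ). -/
open Finset in
/-- Bound for the Euclidean norm of the monomial coefficient vector of the
interpolating polynomial `P_N` of `F`, given a coefficient-norm bound with parameter `ρ_*`,
near-best polynomial approximations `Q_n` with error `C ρ^{-n}`, and Lebesgue constant `Λ`. -/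
theorem stmt_9 (N : ℕ) (hN : 0 < N) (Γ : Set ℂ) (hΓ : Γ.Nonempty) (F : ℂ → ℂ)
    (ρ ρs C Λ : ℝ) (hρ : 1 < ρ) (hρs : 1 < ρs) (hC : 0 ≤ C) (hΛ : 0 ≤ Λ)
    (z : Fin (N + 1) → ℂ) (hz : ∀ j, z j ∈ Γ) (hzinj : Function.Injective z)
    (hcoeff : ∀ n ≤ N, ∀ Q : Polynomial ℂ, Q.natDegree ≤ n →
      Real.sqrt (∑ k ∈ Finset.range (n + 1), ‖Q.coeff k‖ ^ 2) ≤
        ρs ^ n * sSup ((fun w => ‖Q.eval w‖) '' Γ))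
    (Q : ℕ → Polynomial ℂ)
    (hQdeg : ∀ n ≤ N, (Q n).natDegree ≤ n)
    (hQerr : ∀ n ≤ N, ∀ w ∈ Γ, ‖F w - (Q n).eval w‖ ≤ C * (ρ ^ n)⁻¹)
    (hLeb : ∀ Q : Polynomial ℂ, Q.natDegree ≤ N → ∀ w ∈ Γ,
      ‖Q.eval w‖ ≤ Λ * (univ.sup' univ_nonempty fun j => ‖Q.eval (z j)‖))
    (a : EuclideanSpace ℂ (Fin (N + 1)))
    (hinterp : ∀ j, ∑ k, a k * z j ^ (k : ℕ) = F (z j)) :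
    ‖a‖ ≤ sSup ((fun w => ‖F w‖) '' Γ) +
      C * (Λ * (ρs / ρ) ^ N + 2 * ρs * ∑ j ∈ Finset.range N, (ρs / ρ) ^ j + 1) := by
  classical
  have hρ0 : (0:ℝ) < ρ := lt_trans one_pos hρ
  have hρs0 : (0:ℝ) < ρs := lt_trans one_pos hρs
  set v : Polynomial ℂ → EuclideanSpace ℂ (Fin (N + 1)) :=
    fun R => WithLp.toLp 2 (fun k => R.coeff k) with hv
  -- norm of v R in terms of coefficients
  have hnorm : ∀ n ≤ N, ∀ R : Polynomial ℂ, R.natDegree ≤ n →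
      ‖v R‖ = Real.sqrt (∑ k ∈ Finset.range (n + 1), ‖R.coeff k‖ ^ 2) := by
    intro n hn R hR
    rw [EuclideanSpace.norm_eq]
    congr 1
    rw [Fin.sum_univ_eq_sum_range (fun k => ‖R.coeff k‖ ^ 2)]
    rw [← Finset.sum_subset
      (Finset.range_subset_range.mpr (by omega) : Finset.range (n+1) ⊆ Finset.range (N+1))]
    · intro k hk hk2
      simp only [Finset.mem_range] at hk hk2
      rw [Polynomial.coeff_eq_zero_of_natDegree_lt (lt_of_le_of_lt hR (by omega))]
      simp
  have hbound : ∀ n ≤ N, ∀ R : Polynomial ℂ, R.natDegree ≤ n →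
      ‖v R‖ ≤ ρs ^ n * sSup ((fun w => ‖R.eval w‖) '' Γ) := by
    intro n hn R hR
    rw [hnorm n hn R hR]; exact hcoeff n hn R hR
  -- the interpolating polynomial
  set P : Polynomial ℂ := ∑ k : Fin (N+1), Polynomial.C (a k) * Polynomial.X ^ (k:ℕ) with hP
  have hPdeg : P.natDegree ≤ N :=
    Polynomial.natDegree_sum_le_of_forall_le _ _ fun i _ =>
      le_trans (Polynomial.natDegree_C_mul_X_pow_le _ _) (by omega)
  have hPcoeff : ∀ k : Fin (N+1), P.coeff k = a k := by
    intro k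
    rw [hP, Polynomial.finset_sum_coeff]
    rw [Finset.sum_eq_single k]
    · simp
    · intro b _ hb
      rw [Polynomial.coeff_C_mul, Polynomial.coeff_X_pow, if_neg (by
        simpa [Fin.val_eq_val, eq_comm] using hb), mul_zero]
    · simp
  have hPeval : ∀ j, P.eval (z j) = F (z j) := by
    intro j
    rw [hP, Polynomial.eval_finset_sum, ← hinterp j]
    simp
  have hva : a = v P := by
    ext k
    exact (hPcoeff k).symm
  -- Q 0 is constant
  obtain ⟨c, hc⟩ : ∃ c, Q 0 = Polynomial.C c :=
    ⟨(Q 0).coeff 0, (Polynomial.eq_C_coeff_zero_iff_natDegree_eq_zero.mpr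
      (Nat.le_zero.mp (hQdeg 0 (Nat.zero_le N))))⟩
  set M : ℝ := sSup ((fun w => ‖F w‖) '' Γ) with hM
  have himgne : ∀ g : ℂ → ℝ, (g '' Γ).Nonempty := fun g => hΓ.image g
  have hFbdd : BddAbove ((fun w => ‖F w‖) '' Γ) := by
    refine ⟨C + ‖c‖, ?_⟩
    rintro x ⟨w, hw, rfl⟩
    calc ‖F w‖ ≤ ‖F w - (Q 0).eval w‖ + ‖(Q 0).eval w‖ := by
          simpa using norm_add_le (F w - (Q 0).eval w) ((Q 0).eval w)
      _ ≤ C + ‖c‖ := by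
          have := hQerr 0 (Nat.zero_le N) w hw
          simp only [pow_zero, inv_one, mul_one] at this
          have h2 : ‖(Q 0).eval w‖ = ‖c‖ := by rw [hc]; simp
          linarith
  have hFle : ∀ w ∈ Γ, ‖F w‖ ≤ M := fun w hw =>
    le_csSup hFbdd ⟨w, hw, rfl⟩
  -- bound for v (Q 0)
  have hQ0 : ‖v (Q 0)‖ ≤ M + C := by
    have h1 := hbound 0 (Nat.zero_le N) (Q 0) (hQdeg 0 (Nat.zero_le N))
    rw [pow_zero, one_mul] at h1
    refine h1.trans (csSup_le (himgne _) ?_)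
    rintro x ⟨w, hw, rfl⟩
    have h3 := hQerr 0 (Nat.zero_le N) w hw
    simp only [pow_zero, inv_one, mul_one] at h3
    have h4 := norm_sub_norm_le ((Q 0).eval w) (F w)
    rw [norm_sub_rev] at h4
    have := hFle w hw
    linarith
  -- bound for the telescoping differences
  have hdiff : ∀ n ∈ Finset.range N,
      ‖v (Q (n+1) - Q n)‖ ≤ 2 * C * ρs * (ρs / ρ) ^ n := by
    intro n hn
    simp only [Finset.mem_range] at hn
    have hdeg : (Q (n+1) - Q n).natDegree ≤ n + 1 :=
      le_trans (Polynomial.natDegree_sub_le _ _)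
        (max_le (hQdeg (n+1) (by omega)) (le_trans (hQdeg n (by omega)) (by omega)))
    have h1 := hbound (n+1) (by omega) _ hdeg
    have h2 : sSup ((fun w => ‖(Q (n+1) - Q n).eval w‖) '' Γ)
        ≤ 2 * C * (ρ ^ n)⁻¹ := by
      refine csSup_le (himgne _) ?_
      rintro x ⟨w, hw, rfl⟩
      have e1 := hQerr (n+1) (by omega) w hw
      have e2 := hQerr n (by omega) w hw
      have e3 : ‖(Q (n+1) - Q n).eval w‖
          ≤ ‖F w - (Q n).eval w‖ + ‖F w - (Q (n+1)).eval w‖ := by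
        rw [Polynomial.eval_sub, show (Q (n+1)).eval w - (Q n).eval w
          = (F w - (Q n).eval w) - (F w - (Q (n+1)).eval w) from by ring]
        simpa using
          norm_sub_le (F w - (Q n).eval w) (F w - (Q (n+1)).eval w)
      have e4 : C * (ρ ^ (n+1))⁻¹ ≤ C * (ρ ^ n)⁻¹ := by
        apply mul_le_mul_of_nonneg_left _ hC
        apply inv_anti₀ (pow_pos hρ0 n)
        exact pow_le_pow_right₀ (le_of_lt hρ) (by omega)
      linarith
    calc ‖v (Q (n+1) - Q n)‖ ≤ ρs ^ (n+1) * sSup _ := h1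
      _ ≤ ρs ^ (n+1) * (2 * C * (ρ ^ n)⁻¹) :=
          mul_le_mul_of_nonneg_left h2 (le_of_lt (pow_pos hρs0 _))
      _ = 2 * C * ρs * (ρs / ρ) ^ n := by
          rw [div_pow]
          field_simp
          ring
  -- bound for P - Q N via the Lebesgue constant
  have hPQ : ‖v (P - Q N)‖ ≤ C * Λ * (ρs / ρ) ^ N := by
    have hdeg : (P - Q N).natDegree ≤ N :=
      le_trans (Polynomial.natDegree_sub_le _ _) (max_le hPdeg (hQdeg N le_rfl))
    have h1 := hbound N le_rfl _ hdeg
    have h2 : sSup ((fun w => ‖(P - Q N).eval w‖) '' Γ)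
        ≤ Λ * (C * (ρ ^ N)⁻¹) := by
      refine csSup_le (himgne _) ?_
      rintro x ⟨w, hw, rfl⟩
      refine (hLeb _ hdeg w hw).trans ?_
      apply mul_le_mul_of_nonneg_left _ hΛ
      apply Finset.sup'_le
      intro j _
      rw [Polynomial.eval_sub, hPeval j]
      exact hQerr N le_rfl (z j) (hz j)
    calc ‖v (P - Q N)‖ ≤ ρs ^ N * sSup _ := h1
      _ ≤ ρs ^ N * (Λ * (C * (ρ ^ N)⁻¹)) :=
          mul_le_mul_of_nonneg_left h2 (le_of_lt (pow_pos hρs0 _))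
      _ = C * Λ * (ρs / ρ) ^ N := by
          rw [div_pow]
          field_simp
  -- telescoping decomposition
  have hdecomp : a = v (P - Q N) + (∑ n ∈ Finset.range N, v (Q (n+1) - Q n)) + v (Q 0) := by
    rw [hva]
    ext k
    show P.coeff k = _
    have hsum : (∑ n ∈ Finset.range N, v (Q (n+1) - Q n)) k
        = ∑ n ∈ Finset.range N, ((Q (n+1)).coeff (k:ℕ) - (Q n).coeff (k:ℕ)) := by
      rw [WithLp.ofLp_sum, Finset.sum_apply]
      exact Finset.sum_congr rfl fun n _ => by simp [hv]
    simp only [PiLp.add_apply]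
    rw [hsum, Finset.sum_range_sub (fun n => (Q n).coeff (k:ℕ))]
    have h1 : v (P - Q N) k = P.coeff k - (Q N).coeff k := by simp [hv]
    have h2 : v (Q 0) k = (Q 0).coeff k := rfl
    rw [h1, h2]
    ring
  -- put it all together
  have hsumnorm : ‖∑ n ∈ Finset.range N, v (Q (n+1) - Q n)‖
      ≤ ∑ n ∈ Finset.range N, (2 * C * ρs * (ρs / ρ) ^ n) :=
    le_trans (norm_sum_le _ _) (Finset.sum_le_sum hdiff)
  have htotal : ‖a‖ ≤ C * Λ * (ρs / ρ) ^ N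
      + (∑ n ∈ Finset.range N, (2 * C * ρs * (ρs / ρ) ^ n)) + (M + C) := by
    rw [hdecomp]
    calc ‖v (P - Q N) + (∑ n ∈ Finset.range N, v (Q (n+1) - Q n)) + v (Q 0)‖
        ≤ ‖v (P - Q N) + (∑ n ∈ Finset.range N, v (Q (n+1) - Q n))‖ + ‖v (Q 0)‖ :=
          norm_add_le _ _
      _ ≤ ‖v (P - Q N)‖ + ‖∑ n ∈ Finset.range N, v (Q (n+1) - Q n)‖ + ‖v (Q 0)‖ := by
          have := norm_add_le (v (P - Q N)) (∑ n ∈ Finset.range N, v (Q (n+1) - Q n))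
          linarith
      _ ≤ _ := by
          have := hPQ; have := hsumnorm; have := hQ0
          linarith
  refine htotal.trans (le_of_eq ?_)
  rw [show (∑ n ∈ Finset.range N, 2 * C * ρs * (ρs / ρ) ^ n)
    = 2 * C * ρs * ∑ n ∈ Finset.range N, (ρs / ρ) ^ n from by rw [Finset.mul_sum]]
  ring
end

section
/- Let Γ ⊆ ℂ be a nonempty set, let F : ℂ → ℂ, let N be a positive integer, and let ρ > 1, ρ_* > 1, C ≥ 0 be constants. Suppose (i) for every n ≤ N and every complex polynomial Q(z) = Σ_{k=0}^n b_k z^k of degree at most n, (Σ_{k=0}^n |b_k|²)^{1/2} ≤ ρ_*^n · sup_{z∈Γ} |Q(z)|; and (ii) Q₀, Q₁, …, Q_N are polynomials with deg Q_n ≤ n and sup_{z∈Γ} |F(z) − Q_n(z)| ≤ C·ρ^{−n} for all 0 ≤ n ≤ N. Then the coefficient vector b of Q_N satisfies ‖b‖₂ ≤ ( sup_{z∈Γ} |F(z)| + C ) + 2·C·ρ_*·Σ_{j=0}^{N−1} (ρ_*/ρ)^j. -/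
open Polynomial Finset

/-- The coefficient vector of a polynomial, as an element of Euclidean space. -/
noncomputable def coeffVec (n : ℕ) (P : Polynomial ℂ) : EuclideanSpace ℂ (Fin (n + 1)) :=
  WithLp.toLp 2 (fun k => P.coeff k)

lemma coeffVec_add (n : ℕ) (P R : Polynomial ℂ) :
    coeffVec n (P + R) = coeffVec n P + coeffVec n R := by
  ext k; simp [coeffVec]

lemma norm_coeffVec (n : ℕ) (P : Polynomial ℂ) :
    ‖coeffVec n P‖ = Real.sqrt (∑ k ∈ Finset.range (n + 1), ‖P.coeff k‖ ^ 2) := by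
  rw [EuclideanSpace.norm_eq]
  congr 1
  rw [← Fin.sum_univ_eq_sum_range (fun k => ‖P.coeff k‖ ^ 2)]
  simp [coeffVec]

lemma norm_coeffVec_shrink (n m : ℕ) (P : Polynomial ℂ) (hP : P.natDegree ≤ m) (hmn : m ≤ n) :
    ‖coeffVec n P‖ = Real.sqrt (∑ k ∈ Finset.range (m + 1), ‖P.coeff k‖ ^ 2) := by
  rw [norm_coeffVec]
  congr 1
  refine (Finset.sum_subset (by intro k hk; simp at hk ⊢; omega) ?_).symm
  intro k hk hk2
  simp only [Finset.mem_range] at hk hk2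
  rw [P.coeff_eq_zero_of_natDegree_lt (by omega)]
  simp

/-- Bound for the Euclidean norm of the coefficient vector of the last member
`Q_N` of a sequence of near-best polynomial approximations to `F` with errors `C ρ^{-n}`,
given a coefficient-norm bound with parameter `ρ_*`. -/
theorem stmt_10 (N : ℕ) (hN : 0 < N) (Γ : Set ℂ) (hΓ : Γ.Nonempty) (F : ℂ → ℂ)
    (ρ ρs C : ℝ) (hρ : 1 < ρ) (hρs : 1 < ρs) (hC : 0 ≤ C)
    (hcoeff : ∀ n ≤ N, ∀ Q : Polynomial ℂ, Q.natDegree ≤ n →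
      Real.sqrt (∑ k ∈ Finset.range (n + 1), ‖Q.coeff k‖ ^ 2) ≤
        ρs ^ n * sSup ((fun w => ‖Q.eval w‖) '' Γ))
    (Q : ℕ → Polynomial ℂ)
    (hQdeg : ∀ n ≤ N, (Q n).natDegree ≤ n)
    (hQerr : ∀ n ≤ N, ∀ w ∈ Γ, ‖F w - (Q n).eval w‖ ≤ C * (ρ ^ n)⁻¹) :
    Real.sqrt (∑ k ∈ Finset.range (N + 1), ‖(Q N).coeff k‖ ^ 2) ≤
      (sSup ((fun w => ‖F w‖) '' Γ) + C) +
        2 * C * ρs * ∑ j ∈ Finset.range N, (ρs / ρ) ^ j := by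
  have hρ0 : (0:ℝ) < ρ := lt_trans one_pos hρ
  have hρs0 : (0:ℝ) < ρs := lt_trans one_pos hρs
  have hsumnn : (0:ℝ) ≤ ∑ j ∈ Finset.range N, (ρs / ρ) ^ j :=
    Finset.sum_nonneg fun j _ => pow_nonneg (div_nonneg hρs0.le hρ0.le) j
  by_cases hb : BddAbove ((fun w => ‖F w‖) '' Γ)
  · -- bounded case
    set M := sSup ((fun w => ‖F w‖) '' Γ) with hM
    obtain ⟨w0, hw0⟩ := hΓ
    have hM0 : 0 ≤ M := le_trans (norm_nonneg (F w0))
      (le_csSup hb ⟨w0, hw0, rfl⟩)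
    have htel : Q N = Q 0 + ∑ j ∈ Finset.range N, (Q (j + 1) - Q j) := by
      rw [Finset.sum_range_sub (fun i => Q i)]; ring
    rw [← norm_coeffVec]
    have hnorm : ‖coeffVec N (Q N)‖ ≤
        ‖coeffVec N (Q 0)‖ + ∑ j ∈ Finset.range N, ‖coeffVec N (Q (j+1) - Q j)‖ := by
      rw [htel, coeffVec_add]
      refine (norm_add_le _ _).trans ?_
      gcongr
      have hsum : ∀ (s : Finset ℕ) (f : ℕ → Polynomial ℂ),
          coeffVec N (∑ i ∈ s, f i) = ∑ i ∈ s, coeffVec N (f i) := by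
        intro s f
        induction s using Finset.cons_induction with
        | empty => ext k; simp [coeffVec]
        | cons a s ha ih => rw [Finset.sum_cons, Finset.sum_cons, coeffVec_add, ih]
      rw [hsum]
      exact norm_sum_le _ _
    refine hnorm.trans ?_
    have hQ0 : ‖coeffVec N (Q 0)‖ ≤ M + C := by
      rw [norm_coeffVec_shrink N 0 (Q 0) (hQdeg 0 (by omega)) (by omega)]
      refine (hcoeff 0 (by omega) (Q 0) (hQdeg 0 (by omega))).trans ?_
      rw [pow_zero, one_mul]
      refine Real.sSup_le ?_ (by positivity)
      rintro x ⟨w, hw, rfl⟩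
      have h1 := hQerr 0 (by omega) w hw
      simp only [pow_zero, inv_one, mul_one] at h1
      have hFM : ‖F w‖ ≤ M := le_csSup hb ⟨w, hw, rfl⟩
      calc ‖(Q 0).eval w‖ = ‖F w - (F w - (Q 0).eval w)‖ := by ring_nf
        _ ≤ ‖F w‖ + ‖F w - (Q 0).eval w‖ := norm_sub_le _ _
        _ ≤ M + C := by linarith
    have hD : ∀ j ∈ Finset.range N, ‖coeffVec N (Q (j+1) - Q j)‖ ≤
        2 * C * ρs * (ρs / ρ) ^ j := by
      intro j hj
      simp only [Finset.mem_range] at hj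
      have hj1 : j + 1 ≤ N := hj
      have hdeg : (Q (j+1) - Q j).natDegree ≤ j + 1 := by
        refine (Polynomial.natDegree_sub_le _ _).trans ?_
        exact max_le (hQdeg (j+1) hj1) ((hQdeg j (by omega)).trans (by omega))
      rw [norm_coeffVec_shrink N (j+1) _ hdeg hj1]
      refine (hcoeff (j+1) hj1 _ hdeg).trans ?_
      have hsup : sSup ((fun w => ‖(Q (j+1) - Q j).eval w‖) '' Γ) ≤
          2 * C * (ρ ^ j)⁻¹ := by
        refine Real.sSup_le ?_ (by positivity)
        rintro x ⟨w, hw, rfl⟩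
        have h1 := hQerr (j+1) hj1 w hw
        have h2 := hQerr j (by omega) w hw
        have hpow : (ρ ^ (j+1))⁻¹ ≤ (ρ ^ j)⁻¹ := by
          apply inv_anti₀ (by positivity)
          exact pow_le_pow_right₀ hρ.le (by omega)
        simp only [Polynomial.eval_sub] at h1 h2 ⊢
        calc ‖(Q (j+1)).eval w - (Q j).eval w‖
            = ‖(F w - (Q j).eval w) - (F w - (Q (j+1)).eval w)‖ := by ring_nf
          _ ≤ ‖F w - (Q j).eval w‖ + ‖F w - (Q (j+1)).eval w‖ := norm_sub_le _ _
          _ ≤ C * (ρ ^ j)⁻¹ + C * (ρ ^ (j+1))⁻¹ := by linarith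
          _ ≤ 2 * C * (ρ ^ j)⁻¹ := by nlinarith
      calc ρs ^ (j+1) * sSup ((fun w => ‖(Q (j+1) - Q j).eval w‖) '' Γ)
          ≤ ρs ^ (j+1) * (2 * C * (ρ ^ j)⁻¹) := by
            exact mul_le_mul_of_nonneg_left hsup (by positivity)
        _ = 2 * C * ρs * (ρs / ρ) ^ j := by
            rw [div_pow, pow_succ]
            field_simp
    calc ‖coeffVec N (Q 0)‖ + ∑ j ∈ Finset.range N, ‖coeffVec N (Q (j+1) - Q j)‖
        ≤ (M + C) + ∑ j ∈ Finset.range N, 2 * C * ρs * (ρs / ρ) ^ j := by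
          exact add_le_add hQ0 (Finset.sum_le_sum hD)
      _ = (M + C) + 2 * C * ρs * ∑ j ∈ Finset.range N, (ρs / ρ) ^ j := by
          rw [Finset.mul_sum]
  · -- unbounded case
    have hb2 : ¬ BddAbove ((fun w => ‖(Q N).eval w‖) '' Γ) := by
      intro ⟨M, hM⟩
      apply hb
      refine ⟨M + C * (ρ ^ N)⁻¹, ?_⟩
      rintro x ⟨w, hw, rfl⟩
      have h1 := hQerr N le_rfl w hw
      have h2 : ‖(Q N).eval w‖ ≤ M := hM ⟨w, hw, rfl⟩
      calc ‖F w‖ = ‖(F w - (Q N).eval w) + (Q N).eval w‖ := by ring_nf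
        _ ≤ ‖F w - (Q N).eval w‖ + ‖(Q N).eval w‖ := norm_add_le _ _
        _ ≤ M + C * (ρ ^ N)⁻¹ := by linarith
    have h0 := hcoeff N le_rfl (Q N) (hQdeg N le_rfl)
    rw [Real.sSup_of_not_bddAbove hb2, mul_zero] at h0
    rw [Real.sSup_of_not_bddAbove hb]
    have : (0:ℝ) ≤ (0 + C) + 2 * C * ρs * ∑ j ∈ Finset.range N, (ρs / ρ) ^ j := by positivity
    linarith
end
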